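/- Let F be a monotone submodular function on subsets of a finite ground set M with F(∅) = 0, and let k ≥ 1. If S₀ = ∅ and S_{t+1} = S_t ∪ {j_t} where j_t maximizes the marginal gain F(S_t ∪ {j}) − F(S_t) over j ∉ S_t, then F(S_k) ≥ (1 − (1 − 1/k)^k) · OPT ≥ (1 − 1/e) · OPT, where OPT = max{F(A) : A ⊆ M, |A| = k}. -/

import Mathlib

/-- the Nemhauser–Wolsey–Fisher greedy `(1 - 1/e)` guarantee for monotone
submodular maximization under a cardinality constraint. -/
theorem greedy_submodular_guarantee
    {ι : Type*} [Fintype ι] [DecidableEq ι]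
    (F : Finset ι → ℝ)
    (hmono : ∀ Y Z : Finset ι, Y ⊆ Z → F Y ≤ F Z)
    (hsub : ∀ (Y Z : Finset ι), Y ⊆ Z → ∀ l ∉ Z,
      F (insert l Z) - F Z ≤ F (insert l Y) - F Y)
    (hempty : F ∅ = 0)
    (k : ℕ) (hk : 1 ≤ k)
    (S : ℕ → Finset ι) (hS0 : S 0 = ∅)
    (hgreedy : ∀ t < k, ∃ j ∉ S t,
      S (t + 1) = insert j (S t) ∧
      ∀ j' ∉ S t, F (insert j' (S t)) - F (S t) ≤ F (insert j (S t)) - F (S t))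
    (OPT : ℝ)
    (hOPT : ∃ A : Finset ι, A.card = k ∧ F A = OPT)
    (hOPTmax : ∀ A : Finset ι, A.card = k → F A ≤ OPT) :
    (1 - (1 - 1 / (k : ℝ)) ^ k) * OPT ≤ F (S k) ∧
      (1 - 1 / Real.exp 1) * OPT ≤ (1 - (1 - 1 / (k : ℝ)) ^ k) * OPT := by
  obtain ⟨A, hAcard, hAF⟩ := hOPT
  have hOPT0 : 0 ≤ OPT := by
    rw [← hAF, ← hempty]; exact hmono _ _ (Finset.empty_subset _)
  have hkR : (1:ℝ) ≤ (k:ℝ) := by exact_mod_cast hk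
  have hkpos : (0:ℝ) < (k:ℝ) := by linarith
  have hnn : (0:ℝ) ≤ 1 - 1/(k:ℝ) := by
    have : 1/(k:ℝ) ≤ 1 := by
      rw [div_le_one hkpos]; exact hkR
    linarith
  -- telescoping
  have tele : ∀ (B T : Finset ι),
      F (B ∪ T) ≤ F B + ∑ j ∈ T \ B, (F (insert j B) - F B) := by
    intro B T
    induction T using Finset.induction_on with
    | empty => simp
    | @insert a T' ha ih =>
      by_cases haB : a ∈ B
      · have h1 : B ∪ insert a T' = B ∪ T' := by
          rw [Finset.union_insert, Finset.insert_eq_self.2 (Finset.mem_union_left _ haB)]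
        have h2 : insert a T' \ B = T' \ B := Finset.insert_sdiff_of_mem _ haB
        rw [h1, h2]; exact ih
      · have haBT : a ∉ B ∪ T' := by simp [haB, ha]
        have h1 : B ∪ insert a T' = insert a (B ∪ T') := by
          rw [Finset.union_insert]
        have h2 : insert a T' \ B = insert a (T' \ B) :=
          Finset.insert_sdiff_of_notMem _ haB
        have h3 : a ∉ T' \ B := by simp [ha]
        rw [h1, h2, Finset.sum_insert h3]
        have h4 := hsub B (B ∪ T') Finset.subset_union_left a haBT
        linarith
  -- per-step inequality
  have step : ∀ t < k, OPT - F (S (t+1)) ≤ (1 - 1/(k:ℝ)) * (OPT - F (S t)) := by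
    intro t ht
    obtain ⟨j, hj, hSt1, hmax⟩ := hgreedy t ht
    set g := F (S (t+1)) - F (S t) with hg
    have hg0 : 0 ≤ g := by
      have := hmono (S t) (insert j (S t)) (Finset.subset_insert _ _)
      rw [hg, hSt1]; linarith
    have hbound : ∀ j' ∈ A \ S t, F (insert j' (S t)) - F (S t) ≤ g := by
      intro j' hj'
      have := hmax j' (Finset.mem_sdiff.1 hj').2
      rw [hg, hSt1]; exact this
    have h1 : F A ≤ F (S t) + ∑ j' ∈ A \ S t, (F (insert j' (S t)) - F (S t)) := by
      calc F A ≤ F (S t ∪ A) := hmono _ _ Finset.subset_union_right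
        _ ≤ _ := tele (S t) A
    have h2 : ∑ j' ∈ A \ S t, (F (insert j' (S t)) - F (S t)) ≤ ((A \ S t).card : ℝ) * g := by
      have := Finset.sum_le_card_nsmul (A \ S t) _ g hbound
      simpa [nsmul_eq_mul] using this
    have hcard : ((A \ S t).card : ℝ) ≤ (k:ℝ) := by
      have : (A \ S t).card ≤ k := hAcard ▸ Finset.card_le_card (Finset.sdiff_subset)
      exact_mod_cast this
    have h3 : OPT - F (S t) ≤ (k:ℝ) * g := by
      have := mul_le_mul_of_nonneg_right hcard hg0
      rw [← hAF]; linarith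
    have h4 : (OPT - F (S t)) / (k:ℝ) ≤ g := by
      rw [div_le_iff₀ hkpos]; linarith [h3]
    have h5 : (1 - 1/(k:ℝ)) * (OPT - F (S t))
        = (OPT - F (S t)) - (OPT - F (S t)) / (k:ℝ) := by
      field_simp
    rw [h5]; linarith
  have main : ∀ t ≤ k, OPT - F (S t) ≤ (1 - 1/(k:ℝ))^t * OPT := by
    intro t
    induction t with
    | zero => intro _; simp [hS0, hempty]
    | succ t ih =>
      intro ht
      have ht' : t < k := ht
      have h1 := step t ht'
      have h2 := ih (le_of_lt ht')
      calc OPT - F (S (t+1)) ≤ (1 - 1/(k:ℝ)) * (OPT - F (S t)) := h1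
        _ ≤ (1 - 1/(k:ℝ)) * ((1 - 1/(k:ℝ))^t * OPT) := mul_le_mul_of_nonneg_left h2 hnn
        _ = (1 - 1/(k:ℝ))^(t+1) * OPT := by ring
  constructor
  · have := main k le_rfl
    linarith
  · have hexp : (1 - 1/(k:ℝ))^k ≤ 1 / Real.exp 1 := by
      have h1 : 1 - 1/(k:ℝ) ≤ Real.exp (-(1/(k:ℝ))) := by
        have := Real.add_one_le_exp (-(1/(k:ℝ)))
        linarith
      have h2 : (1 - 1/(k:ℝ))^k ≤ (Real.exp (-(1/(k:ℝ))))^k :=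
        pow_le_pow_left₀ hnn h1 k
      have h3 : (Real.exp (-(1/(k:ℝ))))^k = Real.exp ((k:ℝ) * (-(1/(k:ℝ)))) := by
        rw [← Real.exp_nat_mul]
      have h4 : (k:ℝ) * (-(1/(k:ℝ))) = -1 := by
        field_simp
      rw [h3, h4, Real.exp_neg, inv_eq_one_div] at h2
      exact h2
    have : 1 - 1 / Real.exp 1 ≤ 1 - (1 - 1/(k:ℝ))^k := by linarith
    exact mul_le_mul_of_nonneg_right this hOPT0
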